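/- For any partition λ ⊢ n, any semistandard tableau M of shape λ with nonnegative entries, and any tableau T of shape λ with content {1,...,n}: the multiset Dsp^c(M +̂ v) equals Dsp^c(M) if δ_{M,v} = 1, and equals the multiset sum of Dsp^c(M) and {n} if δ_{M,v} = 0; moreover Σ(M +̂ v) = Σ(M) in the first case and Σ(M) + n in the second, and F_{M₊,T} = e_n·F_{M,T} where M₊ adds 1 to every entry of M and e_n = x_1···x_n. -/

import Mathlib

open MvPolynomial

noncomputable section
open scoped Classical

namespace GHS

def entrySumF (μ : YoungDiagram) (f : ℕ → ℕ → ℕ) : ℕ := ∑ c ∈ μ.cells, f c.1 c.2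

def entryFun {μ : YoungDiagram} (M : SemistandardYoungTableau μ) : ℕ → ℕ → ℕ := fun r c => M r c

def entrySum {μ : YoungDiagram} (M : SemistandardYoungTableau μ) : ℕ := entrySumF μ (entryFun M)

def entryMultisetF (μ : YoungDiagram) (f : ℕ → ℕ → ℕ) : Multiset ℕ :=
  μ.cells.val.map fun c => f c.1 c.2

def entryMultiset {μ : YoungDiagram} (M : SemistandardYoungTableau μ) : Multiset ℕ := entryMultisetF μ (entryFun M)

def countLtF (μ : YoungDiagram) (f : ℕ → ℕ → ℕ) (h : ℕ) : ℕ :=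
  (μ.cells.filter fun c => f c.1 c.2 < h).card

def countGe {μ : YoungDiagram} (M : SemistandardYoungTableau μ) (t : ℕ) : ℕ :=
  (μ.cells.filter fun c => t ≤ M c.1 c.2).card

def maxEntryF (μ : YoungDiagram) (f : ℕ → ℕ → ℕ) : ℕ := μ.cells.sup fun c => f c.1 c.2

def DspCF (n : ℕ) (μ : YoungDiagram) (f : ℕ → ℕ → ℕ) : Multiset ℕ :=
  (Finset.Icc 1 (maxEntryF μ f)).val.map fun h => n - countLtF μ f h

def DspC (n : ℕ) {μ : YoungDiagram} (M : SemistandardYoungTableau μ) : Multiset ℕ := DspCF n μ (entryFun M)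

def stdFun (μ : YoungDiagram) (f : ℕ → ℕ → ℕ) : ℕ → ℕ → ℕ := fun r c =>
  if (r, c) ∈ μ then
    (μ.cells.filter fun c' => f c'.1 c'.2 < f r c ∨ (f c'.1 c'.2 = f r c ∧ c'.2 < c)).card + 1
  else 0

def IsStandard (n : ℕ) {μ : YoungDiagram} (S : SemistandardYoungTableau μ) : Prop :=
  entryMultiset S = (Multiset.range n).map (· + 1)

def rowOfF (f : ℕ → ℕ → ℕ) (v : ℕ) : ℕ := sInf {r | ∃ c, f r c = v}

def DsiSet (n : ℕ) {μ : YoungDiagram} (S : SemistandardYoungTableau μ) : Finset ℕ :=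
  (Finset.Ioo 0 n).filter fun i => rowOfF (entryFun S) i < rowOfF (entryFun S) (i + 1)

def jseq (n k : ℕ) (J : Multiset ℕ) (h : ℕ) : ℕ :=
  if h = 0 then 0 else if h = k then n else (J.sort (· ≤ ·)).getD (h - 1) 0

def compFun (n k : ℕ) (J : Multiset ℕ) (h : ℕ) : ℕ := jseq n k J (h + 1) - jseq n k J h

def compMap (n k : ℕ) (J : Multiset ℕ) : Fin k → ℕ := fun h => compFun n k J (h : ℕ)

def contentOfJ (n k : ℕ) (J : Multiset ℕ) : Multiset ℕ :=
  (Multiset.range k).bind fun h => Multiset.replicate (compFun n k J h) h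

def IsTabloid (n : ℕ) (μ : YoungDiagram) (T : Fin n → ℕ × ℕ) : Prop :=
  Function.Injective T ∧ ∀ i, T i ∈ μ

def IsStdFill (n : ℕ) (T : Fin n → ℕ × ℕ) : Prop :=
  ∀ i j : Fin n,
    (((T i).1 = (T j).1 ∧ (T i).2 < (T j).2) ∨ ((T i).2 = (T j).2 ∧ (T i).1 < (T j).1)) → i < j

def rowGroup (n : ℕ) (T : Fin n → ℕ × ℕ) : Finset (Equiv.Perm (Fin n)) :=
  Finset.univ.filter fun τ => ∀ i, (T (τ i)).1 = (T i).1

def colGroup (n : ℕ) (T : Fin n → ℕ × ℕ) : Finset (Equiv.Perm (Fin n)) :=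
  Finset.univ.filter fun σ => ∀ i, (T (σ i)).2 = (T i).2

def pmonF (n : ℕ) (f : ℕ → ℕ → ℕ) (T : Fin n → ℕ × ℕ) : MvPolynomial (Fin n) ℚ :=
  ∏ i, X i ^ f (T i).1 (T i).2

def pexpF (n : ℕ) (f : ℕ → ℕ → ℕ) (T : Fin n → ℕ × ℕ) : Fin n →₀ ℕ :=
  Finsupp.equivFunOnFinite.symm fun i => f (T i).1 (T i).2

def symRT (n : ℕ) (T : Fin n → ℕ × ℕ) (p : MvPolynomial (Fin n) ℚ) : MvPolynomial (Fin n) ℚ :=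
  ∑ τ ∈ rowGroup n T, rename (⇑τ) p

def antisym (n : ℕ) (T : Fin n → ℕ × ℕ) (p : MvPolynomial (Fin n) ℚ) : MvPolynomial (Fin n) ℚ :=
  ∑ σ ∈ colGroup n T, ((Equiv.Perm.sign σ : ℤ) : ℚ) • rename (⇑σ) p

def youngSym (n : ℕ) (T : Fin n → ℕ × ℕ) (p : MvPolynomial (Fin n) ℚ) : MvPolynomial (Fin n) ℚ :=
  antisym n T (symRT n T p)

def stabCardF (n : ℕ) (f : ℕ → ℕ → ℕ) (T : Fin n → ℕ × ℕ) : ℕ :=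
  ((rowGroup n T).filter fun τ : Equiv.Perm (Fin n) => rename (⇑τ) (pmonF n f T) = pmonF n f T).card

def rowPoly (n : ℕ) (f : ℕ → ℕ → ℕ) (T : Fin n → ℕ × ℕ) : MvPolynomial (Fin n) ℚ :=
  (stabCardF n f T : ℚ)⁻¹ • symRT n T (pmonF n f T)

def FMTF (n : ℕ) (f : ℕ → ℕ → ℕ) (T : Fin n → ℕ × ℕ) : MvPolynomial (Fin n) ℚ :=
  (stabCardF n f T : ℚ)⁻¹ • youngSym n T (pmonF n f T)

def FMT (n : ℕ) {μ : YoungDiagram} (M : SemistandardYoungTableau μ) (T : Fin n → ℕ × ℕ) : MvPolynomial (Fin n) ℚ :=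
  FMTF n (entryFun M) T

def degT (n : ℕ) (T : Fin n → ℕ × ℕ) (d : Fin n →₀ ℕ) (j : ℕ) : ℕ :=
  ∑ i ∈ Finset.univ.filter fun i => (T i).2 = j, d i

def gtT (n : ℕ) (T : Fin n → ℕ × ℕ) (d e : Fin n →₀ ℕ) : Prop :=
  ∃ j, degT n T e j < degT n T d j ∧ ∀ j', j < j' → degT n T d j' = degT n T e j'

def VMF (n : ℕ) (μ : YoungDiagram) (f : ℕ → ℕ → ℕ) : Submodule ℚ (MvPolynomial (Fin n) ℚ) :=
  Submodule.span ℚ {p | ∃ T, IsTabloid n μ T ∧ p = FMTF n f T}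

def VM (n : ℕ) {μ : YoungDiagram} (M : SemistandardYoungTableau μ) : Submodule ℚ (MvPolynomial (Fin n) ℚ) :=
  VMF n μ (entryFun M)

def spechtP (n : ℕ) (T : Fin n → ℕ × ℕ) : MvPolynomial (Fin n) ℚ := ∏ i, X i ^ (T i).1

def SpechtSub (n : ℕ) (μ : YoungDiagram) : Submodule ℚ (MvPolynomial (Fin n) ℚ) :=
  Submodule.span ℚ {p | ∃ T, IsTabloid n μ T ∧ p = youngSym n T (spechtP n T)}

def EqHoms (n : ℕ) (W V : Submodule ℚ (MvPolynomial (Fin n) ℚ)) :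
    Submodule ℚ (W →ₗ[ℚ] MvPolynomial (Fin n) ℚ) where
  carrier := {g | (∀ x, g x ∈ V) ∧ ∀ (σ : Equiv.Perm (Fin n)) (x y : W),
      (y : MvPolynomial (Fin n) ℚ) = rename (⇑σ) (x : MvPolynomial (Fin n) ℚ) →
      g y = rename (⇑σ) (g x)}
  add_mem' := by
    rintro a b ⟨ha1, ha2⟩ ⟨hb1, hb2⟩
    refine ⟨fun x => ?_, fun σ x y hxy => ?_⟩
    · simpa using V.add_mem (ha1 x) (hb1 x)
    · simp [LinearMap.add_apply, map_add, ha2 σ x y hxy, hb2 σ x y hxy]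
  zero_mem' := ⟨fun x => by simp, fun σ x y hxy => by simp⟩
  smul_mem' := by
    rintro c a ⟨ha1, ha2⟩
    refine ⟨fun x => ?_, fun σ x y hxy => ?_⟩
    · simpa using V.smul_mem c (ha1 x)
    · simp [LinearMap.smul_apply, map_smul, ha2 σ x y hxy]

def multiplicityIn (n : ℕ) (W V : Submodule ℚ (MvPolynomial (Fin n) ℚ)) : ℕ :=
  Module.finrank ℚ ↑(EqHoms n W V)

def contentSub (n : ℕ) (μc : Multiset ℕ) : Submodule ℚ (MvPolynomial (Fin n) ℚ) :=
  Submodule.span ℚ {p | ∃ d : Fin n → ℕ, Finset.univ.val.map d = μc ∧ p = ∏ i, X i ^ d i}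

def padded (n : ℕ) (μc : Multiset ℕ) : Multiset ℕ :=
  μc + Multiset.replicate (n - Multiset.card μc) 0

def IsCocharge {μ : YoungDiagram} (C : SemistandardYoungTableau μ) : Prop :=
  ∀ h : ℕ, 0 < h → ∀ v ∈ μ.cells, C v.1 v.2 = h →
    (∀ v' ∈ μ.cells, C v'.1 v'.2 = h → v.2 ≤ v'.2) →
    ∃ v'' ∈ μ.cells, C v''.1 v''.2 = h - 1 ∧ v''.1 < v.1

def updF (f : ℕ → ℕ → ℕ) (r c v : ℕ) : ℕ → ℕ → ℕ :=
  fun r' c' => if r' = r ∧ c' = c then v else f r' c'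

def slide : ℕ → (ℕ → ℕ → ℕ) → ℕ × ℕ → (ℕ → ℕ → ℕ) × (ℕ × ℕ)
  | 0, f, p => (f, p)
  | fuel + 1, f, (r, c) =>
    let down := f (r + 1) c
    let right := f r (c + 1)
    if down = 0 ∧ right = 0 then (f, (r, c))
    else if right = 0 ∨ (down ≠ 0 ∧ down < right) then
      slide fuel (updF (updF f r c down) (r + 1) c 0) (r + 1, c)
    else
      slide fuel (updF (updF f r c right) r (c + 1) 0) (r, c + 1)

def evacAux : ℕ → (ℕ → ℕ → ℕ) → ℕ → ℕ → ℕ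
  | 0, _ => fun _ _ => 0
  | m + 1, f =>
    let gp := slide (m + 1) (updF f 0 0 0) (0, 0)
    updF (evacAux m gp.1) gp.2.1 gp.2.2 (m + 1)

def ctJfun (J : Multiset ℕ) (f : ℕ → ℕ → ℕ) : ℕ → ℕ → ℕ :=
  fun r c => J.countP fun j => j < f r c

def JminF (μ : YoungDiagram) (f : ℕ → ℕ → ℕ) : Multiset ℕ :=
  (Finset.Icc 1 (maxEntryF μ f)).val.map fun h => countLtF μ f h

def deltaOne (n : ℕ) (μ : YoungDiagram) (f : ℕ → ℕ → ℕ) (v : ℕ × ℕ) : Prop :=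
  ¬ (rowOfF (evacAux n (stdFun μ f)) n < v.1)

def hatAdd (n : ℕ) (μ : YoungDiagram) (f : ℕ → ℕ → ℕ) (v : ℕ × ℕ) : ℕ → ℕ → ℕ :=
  let Sv := evacAux (n + 1) (updF (evacAux n (stdFun μ f)) v.1 v.2 (n + 1))
  let Jp : Multiset ℕ := (JminF μ f).map (· + 1)
  if deltaOne n μ f v then ctJfun Jp Sv else ctJfun (1 ::ₘ Jp) Sv

def iotaHatFun (f : ℕ → ℕ → ℕ) : ℕ → ℕ → ℕ :=
  fun r c => if r = 0 then (if c = 0 then 0 else f 0 (c - 1)) else f r c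

def iotaT (n : ℕ) (lam : YoungDiagram) (T : Fin n → ℕ × ℕ) : Fin (n + 1) → ℕ × ℕ :=
  fun i => if h : (i : ℕ) < n then T ⟨(i : ℕ), h⟩ else (0, lam.rowLen 0)

def plusOneF (μ : YoungDiagram) (f : ℕ → ℕ → ℕ) : ℕ → ℕ → ℕ :=
  fun r c => if (r, c) ∈ μ then f r c + 1 else 0

def Omega (n : ℕ) (α : ℕ → ℕ) :=
  {w : Fin n → ℕ // ∀ h, (Finset.univ.filter fun i => w i = h).card = α h}

def shiftW (n : ℕ) (α : ℕ → ℕ) (σ : Equiv.Perm (Fin n)) (w : Omega n α) : Omega n α :=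
  ⟨fun i => w.1 (σ.symm i), by
    intro h
    have key : (Finset.univ.filter fun i => w.1 (σ.symm i) = h)
        = (Finset.univ.filter fun i => w.1 i = h).image σ := by
      ext i
      simp only [Finset.mem_filter, Finset.mem_univ, true_and, Finset.mem_image]
      constructor
      · intro hi
        exact ⟨σ.symm i, hi, Equiv.apply_symm_apply σ i⟩
      · rintro ⟨j, hj, rfl⟩
        simpa using hj
    rw [key, Finset.card_image_of_injective _ σ.injective]
    exact w.2 h⟩

def permOmega (n : ℕ) (α : ℕ → ℕ) (σ : Equiv.Perm (Fin n)) : Omega n α ≃ Omega n α where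
  toFun := shiftW n α σ
  invFun := shiftW n α σ⁻¹
  left_inv w := by
    apply Subtype.ext
    funext i
    simp [shiftW, Equiv.Perm.inv_def]
  right_inv w := by
    apply Subtype.ext
    funext i
    simp [shiftW, Equiv.Perm.inv_def]

def ExtPart (n d : ℕ) : Submodule ℚ (MvPolynomial (Fin (n + 1)) ℚ) :=
  ⨆ (lam : YoungDiagram) (_ : lam.card = n) (M : SemistandardYoungTableau lam) (_ : entrySum M = d)
    (v : ℕ × ℕ) (_ : v ∉ lam.cells) (ν : YoungDiagram) (_ : ν.cells = insert v lam.cells)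
    (_ : deltaOne n lam (entryFun M) v),
    VMF (n + 1) ν (hatAdd n lam (entryFun M) v)

def LEPart (n d : ℕ) : Submodule ℚ (MvPolynomial (Fin (n + 1)) ℚ) :=
  ⨆ (lam : YoungDiagram) (_ : lam.card = n) (M : SemistandardYoungTableau lam) (_ : entrySum M + n = d)
    (v : ℕ × ℕ) (_ : v ∉ lam.cells) (ν : YoungDiagram) (_ : ν.cells = insert v lam.cells)
    (_ : ¬ deltaOne n lam (entryFun M) v),
    VMF (n + 1) ν (hatAdd n lam (entryFun M) v)

def EPart (n d : ℕ) : Submodule ℚ (MvPolynomial (Fin (n + 1)) ℚ) :=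
  ⨆ (e : ℕ) (_ : e + (n + 1) = d),
    (homogeneousSubmodule (Fin (n + 1)) ℚ e).map
      (LinearMap.mulLeft ℚ (∏ i : Fin (n + 1), (X i : MvPolynomial (Fin (n + 1)) ℚ)))

lemma updF_self (f : ℕ → ℕ → ℕ) (r c v : ℕ) : updF f r c v r c = v := by simp [updF]

lemma updF_ne (f : ℕ → ℕ → ℕ) (r c v : ℕ) (p : ℕ × ℕ) (h : p ≠ (r, c)) :
    updF f r c v p.1 p.2 = f p.1 p.2 := by
  have : ¬(p.1 = r ∧ p.2 = c) := by
    intro hh; exact h (Prod.ext hh.1 hh.2)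
  simp [updF, this]

def WeakOn (s : Finset (ℕ × ℕ)) (f : ℕ → ℕ → ℕ) : Prop :=
  (∀ p : ℕ × ℕ, p ∉ s → f p.1 p.2 = 0) ∧ ∀ p ∈ s, f p.1 p.2 ≠ 0

lemma card_lb {s : Finset (ℕ × ℕ)} (hls : IsLowerSet (↑s : Set (ℕ × ℕ))) {r c : ℕ}
    (h : (r, c) ∈ s) : r + c + 1 ≤ s.card := by
  classical
  have h1 : (Finset.range (r + 1)).image (fun i => (i, c)) ∪
      (Finset.range c).image (fun j => (r, j)) ⊆ s := by
    intro p hp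
    simp only [Finset.mem_union, Finset.mem_image, Finset.mem_range] at hp
    rcases hp with ⟨i, hi, rfl⟩ | ⟨j, hj, rfl⟩
    · exact hls (show ((i, c) : ℕ × ℕ) ≤ (r, c) from Prod.mk_le_mk.2 ⟨by omega, le_rfl⟩) h
    · exact hls (show ((r, j) : ℕ × ℕ) ≤ (r, c) from Prod.mk_le_mk.2 ⟨le_rfl, by omega⟩) h
  have h2 := Finset.card_le_card h1
  have hdisj : Disjoint ((Finset.range (r + 1)).image (fun i => (i, c)))
      ((Finset.range c).image (fun j => (r, j))) := by
    rw [Finset.disjoint_left]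
    rintro p hp hq
    simp only [Finset.mem_image, Finset.mem_range] at hp hq
    obtain ⟨i, hi, rfl⟩ := hp
    obtain ⟨j, hj, hij⟩ := hq
    have := (Prod.ext_iff.1 hij).2
    omega
  rw [Finset.card_union_of_disjoint hdisj,
    Finset.card_image_of_injective _ (fun a b hab => by simpa using hab),
    Finset.card_image_of_injective _ (fun a b hab => by simpa using hab),
    Finset.card_range, Finset.card_range] at h2
  omega

lemma lower_erase {s : Finset (ℕ × ℕ)} (hls : IsLowerSet (↑s : Set (ℕ × ℕ))) {q : ℕ × ℕ}
    (h1 : (q.1 + 1, q.2) ∉ s) (h2 : (q.1, q.2 + 1) ∉ s) :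
    IsLowerSet (↑(s.erase q) : Set (ℕ × ℕ)) := by
  intro a b hba ha
  simp only [Finset.coe_erase, Set.mem_diff, Finset.mem_coe, Set.mem_singleton_iff] at ha ⊢
  refine ⟨hls hba ha.1, ?_⟩
  rintro rfl
  rcases ha with ⟨has, hne⟩
  have hle : b.1 ≤ a.1 ∧ b.2 ≤ a.2 := Prod.mk_le_mk.1 (by exact hba)
  rcases Nat.lt_or_ge b.1 a.1 with hlt | hge
  · exact h1 (hls (show ((b.1 + 1, b.2) : ℕ × ℕ) ≤ a from Prod.mk_le_mk.2 ⟨by omega, hle.2⟩) has)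
  · have : b.2 < a.2 := by
      rcases Nat.lt_or_ge b.2 a.2 with h | h
      · exact h
      · exact absurd (Prod.ext (by omega) (by omega) : a = b) hne
    exact h2 (hls (show ((b.1, b.2 + 1) : ℕ × ℕ) ≤ a from Prod.mk_le_mk.2 ⟨hle.1, by omega⟩) has)


lemma punched_move {s : Finset (ℕ × ℕ)} {f : ℕ → ℕ → ℕ} {r c : ℕ} {t : ℕ × ℕ}
    (hmem : (r, c) ∈ s) (hw : WeakOn (s.erase (r, c)) f)
    (ht : t ∈ s) (htne : t ≠ (r, c)) :
    WeakOn (s.erase t) (updF (updF f r c (f t.1 t.2)) t.1 t.2 0) ∧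
    (s.erase t).val.map (fun p => updF (updF f r c (f t.1 t.2)) t.1 t.2 0 p.1 p.2)
      = (s.erase (r, c)).val.map (fun p => f p.1 p.2) := by
  set g := updF (updF f r c (f t.1 t.2)) t.1 t.2 0 with hgdef
  have htm : t ∈ s.erase (r, c) := Finset.mem_erase.2 ⟨htne, ht⟩
  have hfx : ∀ p : ℕ × ℕ, p ≠ t → p ≠ (r, c) → g p.1 p.2 = f p.1 p.2 := by
    intro p h1 h2
    rw [hgdef, updF_ne _ _ _ _ _ (by simpa using h1), updF_ne _ _ _ _ _ h2]
  have hgt : g t.1 t.2 = 0 := by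
    rw [hgdef]; exact updF_self _ _ _ _
  have hgrc : g r c = f t.1 t.2 := by
    have h0 : ((r, c) : ℕ × ℕ) ≠ t := fun h => htne h.symm
    have h1 : ((r, c) : ℕ × ℕ) ≠ (t.1, t.2) := by simpa using h0
    have := updF_ne (updF f r c (f t.1 t.2)) t.1 t.2 0 (r, c) h1
    rw [hgdef]
    simpa [updF_self] using this
  constructor
  · constructor
    · intro p hp
      by_cases h1 : p = t
      · subst h1; exact hgt
      · have hps : p ∉ s := by
          intro hins; exact hp (Finset.mem_erase.2 ⟨h1, hins⟩)
        have h2 : p ≠ (r, c) := by rintro rfl; exact hps hmem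
        rw [hfx p h1 h2]
        exact hw.1 p (fun hin => hps (Finset.mem_of_mem_erase hin))
    · intro p hp
      rcases Finset.mem_erase.1 hp with ⟨hpt, hps⟩
      by_cases h2 : p = (r, c)
      · subst h2
        show g _ _ ≠ 0
        rw [show g (r,c).1 (r,c).2 = g r c from rfl, hgrc]
        exact hw.2 t htm
      · rw [hfx p hpt h2]
        exact hw.2 p (Finset.mem_erase.2 ⟨h2, hps⟩)
  · have hrc_in : (r, c) ∈ s.erase t := Finset.mem_erase.2 ⟨fun h => htne h.symm, hmem⟩
    have e1 : (s.erase t).val = (r, c) ::ₘ ((s.erase t).erase (r, c)).val := by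
      rw [Finset.erase_val]
      exact (Multiset.cons_erase (Finset.mem_def.1 hrc_in)).symm
    have e2 : (s.erase (r, c)).val = t ::ₘ ((s.erase (r, c)).erase t).val := by
      rw [Finset.erase_val]
      exact (Multiset.cons_erase (Finset.mem_def.1 htm)).symm
    have ecomm : ((s.erase t).erase (r, c)).val = ((s.erase (r, c)).erase t).val := by
      rw [Finset.erase_val, Finset.erase_val, Finset.erase_val, Finset.erase_val]
      exact Multiset.erase_comm _ _ _
    rw [e1, e2, Multiset.map_cons, Multiset.map_cons, ecomm]
    have tails : Multiset.map (fun p => g p.1 p.2) ((s.erase (r, c)).erase t).val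
        = Multiset.map (fun p => f p.1 p.2) ((s.erase (r, c)).erase t).val := by
      refine Multiset.map_congr rfl (fun x hx => ?_)
      have hx' := Finset.mem_def.2 hx
      rcases Finset.mem_erase.1 hx' with ⟨hxt, hx''⟩
      rcases Finset.mem_erase.1 hx'' with ⟨hxrc, _⟩
      exact hfx x hxt hxrc
    rw [tails, hgrc]

lemma slide_spec : ∀ (fuel : ℕ) (f : ℕ → ℕ → ℕ) (r c : ℕ) (s : Finset (ℕ × ℕ)),
    IsLowerSet (↑s : Set (ℕ × ℕ)) → (r, c) ∈ s → WeakOn (s.erase (r, c)) f →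
    s.card ≤ fuel + r + c + 1 →
    ∃ g q, slide fuel f (r, c) = (g, q) ∧ q ∈ s ∧ (q.1 + 1, q.2) ∉ s ∧ (q.1, q.2 + 1) ∉ s ∧
      WeakOn (s.erase q) g ∧
      (s.erase q).val.map (fun p => g p.1 p.2) = (s.erase (r, c)).val.map (fun p => f p.1 p.2) := by
  intro fuel
  induction fuel with
  | zero =>
    intro f r c s hls hmem hw hcard
    have hnz : ∀ p : ℕ × ℕ, f p.1 p.2 ≠ 0 → p ∈ s := by
      intro p hp
      by_contra hps
      exact hp (hw.1 p (fun hin => hps (Finset.mem_of_mem_erase hin)))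
    have hd : f (r + 1) c = 0 := by
      by_contra h
      have := card_lb hls (hnz (r + 1, c) h)
      omega
    have hr : f r (c + 1) = 0 := by
      by_contra h
      have := card_lb hls (hnz (r, c + 1) h)
      omega
    refine ⟨f, (r, c), rfl, hmem, ?_, ?_, hw, rfl⟩
    · intro hin
      exact hw.2 _ (Finset.mem_erase.2 ⟨by simp, hin⟩) hd
    · intro hin
      exact hw.2 _ (Finset.mem_erase.2 ⟨by simp, hin⟩) hr
  | succ fuel ih =>
    intro f r c s hls hmem hw hcard
    by_cases hstop : f (r + 1) c = 0 ∧ f r (c + 1) = 0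
    · refine ⟨f, (r, c), ?_, hmem, ?_, ?_, hw, rfl⟩
      · simp only [slide]
        rw [if_pos hstop]
      · intro hin
        exact hw.2 _ (Finset.mem_erase.2 ⟨by simp, hin⟩) hstop.1
      · intro hin
        exact hw.2 _ (Finset.mem_erase.2 ⟨by simp, hin⟩) hstop.2
    · have hnz : ∀ p : ℕ × ℕ, f p.1 p.2 ≠ 0 → p ∈ s ∧ p ≠ (r, c) := by
        intro p hp
        have : p ∈ s.erase (r, c) := by
          by_contra hps
          exact hp (hw.1 p hps)
        exact ⟨Finset.mem_of_mem_erase this, (Finset.mem_erase.1 this).1⟩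
      by_cases hdir : f r (c + 1) = 0 ∨ (f (r + 1) c ≠ 0 ∧ f (r + 1) c < f r (c + 1))
      · -- move down
        have hdnz : f (r + 1) c ≠ 0 := by
          rcases hdir with h | h
          · intro h0; exact hstop ⟨h0, h⟩
          · exact h.1
        obtain ⟨htin, htne⟩ := hnz (r + 1, c) hdnz
        obtain ⟨hw', hmapeq⟩ := punched_move hmem hw htin htne
        obtain ⟨g, q, heq, hq1, hq2, hq3, hq4, hq5⟩ :=
          ih (updF (updF f r c (f (r + 1) c)) (r + 1) c 0) (r + 1) c s hls htin hw'
            (by omega)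
        refine ⟨g, q, ?_, hq1, hq2, hq3, hq4, ?_⟩
        · simp only [slide]
          rw [if_neg hstop, if_pos hdir]
          exact heq
        · rw [hq5]
          exact hmapeq
      · -- move right
        have hrnz : f r (c + 1) ≠ 0 := by
          intro h0; exact hdir (Or.inl h0)
        obtain ⟨htin, htne⟩ := hnz (r, c + 1) hrnz
        obtain ⟨hw', hmapeq⟩ := punched_move hmem hw htin htne
        obtain ⟨g, q, heq, hq1, hq2, hq3, hq4, hq5⟩ :=
          ih (updF (updF f r c (f r (c + 1))) r (c + 1) 0) r (c + 1) s hls htin hw'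
            (by omega)
        refine ⟨g, q, ?_, hq1, hq2, hq3, hq4, ?_⟩
        · simp only [slide]
          rw [if_neg hstop, if_neg hdir]
          exact heq
        · rw [hq5]
          exact hmapeq

lemma evac_spec : ∀ (m : ℕ) (f : ℕ → ℕ → ℕ) (s : Finset (ℕ × ℕ)),
    IsLowerSet (↑s : Set (ℕ × ℕ)) → WeakOn s f → s.card = m →
    WeakOn s (evacAux m f) ∧
    s.val.map (fun p => evacAux m f p.1 p.2) = (Multiset.range m).map (· + 1) := by
  intro m
  induction m with
  | zero =>
    intro f s hls hw hcard
    have hs : s = ∅ := Finset.card_eq_zero.1 hcard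
    subst hs
    constructor
    · exact ⟨fun p _ => rfl, fun p hp => absurd hp (Finset.notMem_empty p)⟩
    · simp [evacAux]
  | succ m ih =>
    intro f s hls hw hcard
    have hne : s.Nonempty := Finset.card_pos.1 (by omega)
    obtain ⟨p0, hp0⟩ := hne
    have h00 : ((0, 0) : ℕ × ℕ) ∈ s :=
      hls (show ((0, 0) : ℕ × ℕ) ≤ p0 from Prod.mk_le_mk.2 ⟨Nat.zero_le _, Nat.zero_le _⟩) hp0
    have hw0 : WeakOn (s.erase (0, 0)) (updF f 0 0 0) := by
      constructor
      · intro p hp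
        by_cases hp0' : p = (0, 0)
        · subst hp0'; exact updF_self f 0 0 0
        · rw [updF_ne f 0 0 0 p hp0']
          exact hw.1 p (fun hin => hp (Finset.mem_erase.2 ⟨hp0', hin⟩))
      · intro p hp
        rcases Finset.mem_erase.1 hp with ⟨hne', hin⟩
        rw [updF_ne f 0 0 0 p hne']
        exact hw.2 p hin
    obtain ⟨g, q, heq, hq1, hq2, hq3, hq4, hq5⟩ :=
      slide_spec (m + 1) (updF f 0 0 0) 0 0 s hls h00 hw0 (by omega)
    have hlow' : IsLowerSet (↑(s.erase q) : Set (ℕ × ℕ)) := lower_erase hls hq2 hq3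
    have hcard' : (s.erase q).card = m := by
      rw [Finset.card_erase_of_mem hq1]; omega
    obtain ⟨ihw, ihmap⟩ := ih g (s.erase q) hlow' hq4 hcard'
    have hE : evacAux (m + 1) f = updF (evacAux m g) q.1 q.2 (m + 1) := by
      simp only [evacAux]
      rw [heq]
    constructor
    · constructor
      · intro p hp
        rw [hE]
        have hpq : p ≠ q := fun h => hp (h ▸ hq1)
        rw [updF_ne _ _ _ _ p hpq]
        exact ihw.1 p (fun hin => hp (Finset.mem_of_mem_erase hin))
      · intro p hp
        rw [hE]
        by_cases hpq : p = q
        · subst hpq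
          rw [show (updF (evacAux m g) p.1 p.2 (m + 1)) p.1 p.2 = m + 1 from updF_self _ _ _ _]
          omega
        · rw [updF_ne _ _ _ _ p hpq]
          exact ihw.2 p (Finset.mem_erase.2 ⟨hpq, hp⟩)
    · rw [hE]
      have e1 : s.val = q ::ₘ (s.erase q).val := by
        rw [Finset.erase_val]
        exact (Multiset.cons_erase (Finset.mem_def.1 hq1)).symm
      rw [e1, Multiset.map_cons, Multiset.range_succ, Multiset.map_cons]
      have tl : (s.erase q).val.map (fun p => updF (evacAux m g) q.1 q.2 (m + 1) p.1 p.2)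
          = (Multiset.range m).map (· + 1) := by
        rw [← ihmap]
        refine Multiset.map_congr rfl (fun x hx => ?_)
        have hxq : x ≠ q := (Finset.mem_erase.1 (Finset.mem_def.2 hx)).1
        exact updF_ne _ _ _ _ x hxq
      rw [tl, updF_self]


lemma mrange_succ' (n : ℕ) : Multiset.range (n + 1) = 0 ::ₘ (Multiset.range n).map (· + 1) := by
  simp only [Multiset.range, List.range_succ_eq_map]
  rfl

lemma countP_lt_range (t : ℕ) : ∀ N, (Multiset.range N).countP (· < t) = min t N := by
  intro N; induction N with
  | zero => simp
  | succ N ihN =>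
    rw [Multiset.range_succ, Multiset.countP_cons, ihN]
    split_ifs <;> omega

lemma countP_ge_range (a : ℕ) : ∀ N, (Multiset.range N).countP (fun k => a < k + 1) = N - a := by
  intro N; induction N with
  | zero => simp
  | succ N ihN =>
    rw [Multiset.range_succ, Multiset.countP_cons, ihN]
    split_ifs <;> omega

lemma sum_ite_count {α : Type*} (p : α → Prop) [DecidablePred p] :
    ∀ s : Multiset α, (s.map fun x => if p x then 1 else 0).sum = s.countP p := by
  intro s; induction s using Multiset.induction with
  | empty => simp
  | cons a s ihs =>
    rw [Multiset.map_cons, Multiset.sum_cons, Multiset.countP_cons, ihs]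
    split_ifs <;> omega

lemma Icc_one_val : ∀ m : ℕ, (Finset.Icc 1 m).val = (Multiset.range m).map (· + 1) := by
  intro m; induction m with
  | zero => simp
  | succ m ihm =>
    rw [Multiset.range_succ, Multiset.map_cons, ← ihm]
    rw [show Finset.Icc 1 (m + 1) = insert (m + 1) (Finset.Icc 1 m) from by
      ext x
      simp only [Finset.mem_Icc, Finset.mem_insert]
      omega]
    rw [Finset.insert_val_of_notMem (by simp)]

def cntA (J : Multiset ℕ) (N h : ℕ) : ℕ :=
  Multiset.countP (fun v => J.countP (· < v) < h) ((Multiset.range N).map (· + 1))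

lemma K (N : ℕ) (J : Multiset ℕ) :
    (Multiset.range (J.countP (· < N))).map (fun k => N - cntA J N (k + 1))
      = (J.filter (· < N)).map (fun j => N - j) := by
  induction J using Multiset.strongInductionOn with
  | ih J ihJ =>
    by_cases hall : ∀ j ∈ J, ¬ j < N
    · rw [Multiset.countP_eq_zero.2 hall, Multiset.filter_eq_nil.2 hall]
      simp
    · push_neg at hall
      obtain ⟨j0, hj0J, hj0⟩ := hall
      have hfne : J.toFinset.Nonempty := ⟨j0, Multiset.mem_toFinset.2 hj0J⟩
      set t := J.toFinset.min' hfne with htdef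
      have htJ : t ∈ J := Multiset.mem_toFinset.1 (J.toFinset.min'_mem hfne)
      have hmin : ∀ b ∈ J, t ≤ b := fun b hb => J.toFinset.min'_le b (Multiset.mem_toFinset.2 hb)
      have htN : t < N := lt_of_le_of_lt (hmin j0 hj0J) hj0
      set J' := J.erase t with hJ'def
      have hcons : t ::ₘ J' = J := Multiset.cons_erase htJ
      have hmin' : ∀ b ∈ J', t ≤ b := fun b hb => hmin b (Multiset.mem_of_mem_erase hb)
      have hIH := ihJ J' (Multiset.erase_lt.2 htJ)
      have hc : J.countP (· < N) = J'.countP (· < N) + 1 := by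
        rw [← hcons, Multiset.countP_cons, if_pos htN]
      have hA1 : cntA J N 1 = t := by
        unfold cntA
        have hpred : ∀ v : ℕ, (J.countP (· < v) < 1) ↔ v ≤ t := by
          intro v
          constructor
          · intro hv
            by_contra hvt
            push_neg at hvt
            have : 0 < J.countP (· < v) := Multiset.countP_pos.2 ⟨t, htJ, hvt⟩
            omega
          · intro hv
            have h0 : J.countP (· < v) = 0 :=
              Multiset.countP_eq_zero.2 (fun a ha => by have := hmin a ha; omega)
            omega
        simp only [hpred]
        rw [Multiset.countP_map, ← Multiset.countP_eq_card_filter]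
        have : (Multiset.range N).countP (fun k => k + 1 ≤ t) = (Multiset.range N).countP (· < t) := by
          apply Multiset.countP_congr rfl
          intro x _
          constructor <;> (intro; omega)
        rw [this, countP_lt_range]
        omega
      have hA2 : ∀ h, 1 ≤ h → cntA J N (h + 1) = cntA J' N h := by
        intro h hh
        unfold cntA
        have hpred : ∀ v : ℕ, (J.countP (· < v) < h + 1) ↔ (J'.countP (· < v) < h) := by
          intro v
          have hcv : J.countP (· < v) = J'.countP (· < v) + (if t < v then 1 else 0) := by
            rw [← hcons, Multiset.countP_cons]
          by_cases htv : t < v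
          · rw [hcv, if_pos htv]; omega
          · have h0 : J'.countP (· < v) = 0 :=
              Multiset.countP_eq_zero.2 (fun a ha => by have := hmin' a ha; omega)
            rw [hcv, h0, if_neg htv]; omega
        simp only [hpred]
      rw [hc, ← hcons, Multiset.filter_cons_of_pos (p := fun x => x < N) J' htN, Multiset.map_cons]
      rw [mrange_succ', Multiset.map_cons, Multiset.map_map]
      have hhead : N - cntA (t ::ₘ J') N (0 + 1) = N - t := by
        rw [hcons]; norm_num [hA1]
      have htail : Multiset.map ((fun k => N - cntA (t ::ₘ J') N (k + 1)) ∘ fun x => x + 1)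
          (Multiset.range (Multiset.countP (fun x => x < N) J'))
          = Multiset.map (fun j => N - j) (Multiset.filter (fun x => x < N) J') := by
        rw [← hIH]
        refine Multiset.map_congr rfl (fun k _ => ?_)
        show N - cntA (t ::ₘ J') N (k + 1 + 1) = N - cntA J' N (k + 1)
        rw [hcons, hA2 (k + 1) (by omega)]
      rw [hhead, htail]

lemma sumA (N : ℕ) : ∀ J : Multiset ℕ,
    (((Multiset.range N).map (· + 1)).map (fun v => J.countP (· < v))).sum
      = (J.map (fun j => N - j)).sum := by
  intro J; induction J using Multiset.induction with
  | empty => simp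
  | cons a J ihJ =>
    have hpt : ∀ v : ℕ, ((a ::ₘ J).countP (· < v)) = J.countP (· < v) + (if a < v then 1 else 0) :=
      fun v => Multiset.countP_cons _ _ _
    simp only [hpt]
    rw [Multiset.sum_map_add, ihJ, Multiset.map_cons, Multiset.sum_cons]
    have hend : (((Multiset.range N).map (· + 1)).map (fun v => if a < v then 1 else 0)).sum = N - a := by
      rw [sum_ite_count, Multiset.countP_map, ← Multiset.countP_eq_card_filter]
      exact countP_ge_range a N
    rw [hend]
    omega


lemma countP_impl {α : Type*} (p q : α → Prop) [DecidablePred p] [DecidablePred q]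
    (s : Multiset α) (h : ∀ a ∈ s, p a → q a) : s.countP p ≤ s.countP q := by
  induction s using Multiset.induction with
  | empty => simp
  | cons a s ihs =>
    rw [Multiset.countP_cons, Multiset.countP_cons]
    have h2 := ihs (fun a ha hpa => h a (Multiset.mem_cons_of_mem ha) hpa)
    have h3 := h a (Multiset.mem_cons_self a s)
    split_ifs with h4 h5 <;> try omega
    · exact absurd (h3 h4) h5

lemma countLtF_eq_cntA {N : ℕ} {ν : YoungDiagram} {F : ℕ → ℕ → ℕ} {J : Multiset ℕ}
    (hcont : ν.cells.val.map (fun p => F p.1 p.2) = (Multiset.range N).map (· + 1))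
    (h : ℕ) : countLtF ν (ctJfun J F) h = cntA J N h := by
  unfold countLtF cntA ctJfun
  have h1 : (ν.cells.filter (fun c => J.countP (· < F c.1 c.2) < h)).card
      = Multiset.countP (fun c => J.countP (· < F c.1 c.2) < h) ν.cells.val := by
    rw [Multiset.countP_eq_card_filter]
    rfl
  rw [h1, ← hcont, Multiset.countP_map, ← Multiset.countP_eq_card_filter]

lemma maxEntryF_ctJ {N : ℕ} {ν : YoungDiagram} {F : ℕ → ℕ → ℕ} {J : Multiset ℕ}
    (hcont : ν.cells.val.map (fun p => F p.1 p.2) = (Multiset.range N).map (· + 1))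
    (hN : 0 < N) :
    maxEntryF ν (ctJfun J F) = J.countP (· < N) := by
  unfold maxEntryF ctJfun
  apply le_antisymm
  · apply Finset.sup_le
    intro c hc
    have hFc : F c.1 c.2 ∈ (Multiset.range N).map (· + 1) := by
      rw [← hcont]
      exact Multiset.mem_map_of_mem _ (Finset.mem_def.1 hc)
    obtain ⟨k, hk, hFk⟩ := Multiset.mem_map.1 hFc
    have hkN := Multiset.mem_range.1 hk
    exact countP_impl _ _ J (fun a _ ha => by omega)
  · have hNm : N ∈ ν.cells.val.map (fun p => F p.1 p.2) := by
      rw [hcont]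
      exact Multiset.mem_map.2 ⟨N - 1, Multiset.mem_range.2 (by omega), by omega⟩
    obtain ⟨c, hc, hFc⟩ := Multiset.mem_map.1 hNm
    have := Finset.le_sup (f := fun c => J.countP (fun j => j < F c.1 c.2)) (Finset.mem_def.2 hc)
    rw [hFc] at this
    exact this

lemma DspCF_ctJ {N : ℕ} {ν : YoungDiagram} {F : ℕ → ℕ → ℕ} {J : Multiset ℕ}
    (hcont : ν.cells.val.map (fun p => F p.1 p.2) = (Multiset.range N).map (· + 1))
    (hN : 0 < N) :
    DspCF N ν (ctJfun J F) = (J.filter (· < N)).map (fun j => N - j) := by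
  unfold DspCF
  rw [maxEntryF_ctJ hcont hN, Icc_one_val, Multiset.map_map, ← K N J]
  refine Multiset.map_congr rfl (fun k _ => ?_)
  show N - countLtF ν (ctJfun J F) (k + 1) = N - cntA J N (k + 1)
  rw [countLtF_eq_cntA hcont]

lemma entrySumF_ctJ {N : ℕ} {ν : YoungDiagram} {F : ℕ → ℕ → ℕ} {J : Multiset ℕ}
    (hcont : ν.cells.val.map (fun p => F p.1 p.2) = (Multiset.range N).map (· + 1)) :
    entrySumF ν (ctJfun J F) = (J.map (fun j => N - j)).sum := by
  unfold entrySumF ctJfun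
  rw [Finset.sum_eq_multiset_sum]
  have h1 : ν.cells.val.map (fun c => J.countP (fun j => j < F c.1 c.2))
      = (ν.cells.val.map (fun p => F p.1 p.2)).map (fun v => J.countP (· < v)) := by
    rw [Multiset.map_map]
    rfl
  rw [h1, hcont, sumA]

lemma DspCF_eq_Jmin (n : ℕ) (lam : YoungDiagram) (f : ℕ → ℕ → ℕ) :
    DspCF n lam f = (JminF lam f).map (fun j => n - j) := by
  unfold DspCF JminF
  rw [Multiset.map_map]
  rfl

lemma JminF_lt {lam : YoungDiagram} {f : ℕ → ℕ → ℕ} (hne : lam.cells.Nonempty) :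
    ∀ j ∈ JminF lam f, j < lam.card := by
  intro j hj
  obtain ⟨h, hh, hjh⟩ := Multiset.mem_map.1 hj
  have hh' := Finset.mem_Icc.1 (Finset.mem_def.2 hh)
  obtain ⟨a, ha, hsup⟩ := Finset.exists_mem_eq_sup lam.cells hne (fun c => f c.1 c.2)
  have hnlt : ¬ (f a.1 a.2 < h) := by
    have : h ≤ maxEntryF lam f := hh'.2
    rw [maxEntryF, hsup] at this
    omega
  have hss : (lam.cells.filter fun c => f c.1 c.2 < h) ⊂ lam.cells := by
    rw [Finset.ssubset_iff_of_subset (Finset.filter_subset _ _)]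
    exact ⟨a, ha, fun hmem => hnlt (Finset.mem_filter.1 hmem).2⟩
  have := Finset.card_lt_card hss
  rw [← hjh]
  exact this

lemma entrySumF_eq_Jmin (lam : YoungDiagram) (f : ℕ → ℕ → ℕ) :
    entrySumF lam f = ((JminF lam f).map (fun j => lam.card - j)).sum := by
  have hsplit : ∀ h : ℕ, countLtF lam f h + (lam.cells.filter fun c => h ≤ f c.1 c.2).card
      = lam.card := by
    intro h
    unfold countLtF
    rw [show (lam.cells.filter fun c => h ≤ f c.1 c.2)
        = (lam.cells.filter fun c => ¬ (f c.1 c.2 < h)) from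
      Finset.filter_congr (fun x _ => by omega)]
    exact Finset.card_filter_add_card_filter_not _
  have hstep : ((JminF lam f).map (fun j => lam.card - j)).sum
      = ∑ h ∈ Finset.Icc 1 (maxEntryF lam f), (lam.cells.filter fun c => h ≤ f c.1 c.2).card := by
    unfold JminF
    rw [Multiset.map_map, Finset.sum_eq_multiset_sum]
    refine congrArg Multiset.sum (Multiset.map_congr rfl (fun h _ => ?_))
    show lam.card - countLtF lam f h = _
    have := hsplit h
    omega
  rw [hstep]
  have hswap : ∑ h ∈ Finset.Icc 1 (maxEntryF lam f), (lam.cells.filter fun c => h ≤ f c.1 c.2).card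
      = ∑ c ∈ lam.cells, ∑ h ∈ Finset.Icc 1 (maxEntryF lam f), if h ≤ f c.1 c.2 then 1 else 0 := by
    rw [Finset.sum_comm]
    refine Finset.sum_congr rfl (fun h _ => ?_)
    exact Finset.card_filter _ _
  rw [hswap]
  unfold entrySumF
  refine (Finset.sum_congr rfl (fun c hc => ?_)).symm
  have hle : f c.1 c.2 ≤ maxEntryF lam f :=
    Finset.le_sup (f := fun c : ℕ × ℕ => f c.1 c.2) hc
  have hIcc : ∑ h ∈ Finset.Icc 1 (maxEntryF lam f), (if h ≤ f c.1 c.2 then 1 else 0)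
      = ((Finset.Icc 1 (maxEntryF lam f)).filter (fun h => h ≤ f c.1 c.2)).card :=
    (Finset.card_filter _ _).symm
  rw [hIcc, show (Finset.Icc 1 (maxEntryF lam f)).filter (fun h => h ≤ f c.1 c.2)
      = Finset.Icc 1 (f c.1 c.2) from by
    ext x
    simp only [Finset.mem_filter, Finset.mem_Icc]
    omega]
  rw [Nat.card_Icc]
  omega


lemma rename_prodX {n : ℕ} (σ : Equiv.Perm (Fin n)) :
    rename ⇑σ (∏ i : Fin n, (X i : MvPolynomial (Fin n) ℚ)) = ∏ i : Fin n, X i := by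
  rw [map_prod]
  simp only [rename_X]
  exact Equiv.prod_comp σ (fun i => (X i : MvPolynomial (Fin n) ℚ))

lemma prodX_ne_zero (n : ℕ) : (∏ i : Fin n, (X i : MvPolynomial (Fin n) ℚ)) ≠ 0 :=
  Finset.prod_ne_zero_iff.2 (fun i _ => X_ne_zero i)

lemma pmon_plusOne {n : ℕ} {lam : YoungDiagram} {f : ℕ → ℕ → ℕ} {T : Fin n → ℕ × ℕ}
    (hT : ∀ i, T i ∈ lam) :
    pmonF n (plusOneF lam f) T = pmonF n f T * ∏ i : Fin n, X i := by
  unfold pmonF plusOneF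
  rw [← Finset.prod_mul_distrib]
  refine Finset.prod_congr rfl (fun i _ => ?_)
  rw [if_pos (show ((T i).1, (T i).2) ∈ lam from by rw [Prod.mk.eta]; exact hT i)]
  rw [pow_succ]

lemma stab_plusOne {n : ℕ} {lam : YoungDiagram} {f : ℕ → ℕ → ℕ} {T : Fin n → ℕ × ℕ}
    (hT : ∀ i, T i ∈ lam) :
    stabCardF n (plusOneF lam f) T = stabCardF n f T := by
  unfold stabCardF
  congr 1
  apply Finset.filter_congr
  intro τ _
  rw [pmon_plusOne hT, map_mul, rename_prodX]
  exact mul_left_inj' (prodX_ne_zero n)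

lemma symRT_mul {n : ℕ} {T : Fin n → ℕ × ℕ} (p : MvPolynomial (Fin n) ℚ) :
    symRT n T (p * ∏ i : Fin n, X i) = symRT n T p * ∏ i : Fin n, X i := by
  unfold symRT
  rw [Finset.sum_mul]
  refine Finset.sum_congr rfl (fun τ _ => ?_)
  rw [map_mul, rename_prodX]

lemma antisym_mul {n : ℕ} {T : Fin n → ℕ × ℕ} (p : MvPolynomial (Fin n) ℚ) :
    antisym n T (p * ∏ i : Fin n, X i) = antisym n T p * ∏ i : Fin n, X i := by
  unfold antisym
  rw [Finset.sum_mul]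
  refine Finset.sum_congr rfl (fun σ _ => ?_)
  rw [map_mul, rename_prodX, smul_mul_assoc]

lemma FMTF_plusOne {n : ℕ} {lam : YoungDiagram} {f : ℕ → ℕ → ℕ} {T : Fin n → ℕ × ℕ}
    (hT : ∀ i, T i ∈ lam) :
    FMTF n (plusOneF lam f) T = (∏ i : Fin n, X i) * FMTF n f T := by
  unfold FMTF youngSym
  rw [stab_plusOne hT, pmon_plusOne hT, symRT_mul, antisym_mul, ← smul_mul_assoc, mul_comm]



lemma stdFun_weak (lam : YoungDiagram) (f : ℕ → ℕ → ℕ) : WeakOn lam.cells (stdFun lam f) := by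
  constructor
  · intro p hp
    have h1 : ¬ ((p.1, p.2) ∈ lam) := by
      rw [Prod.mk.eta, ← YoungDiagram.mem_cells]; exact hp
    simp only [stdFun, if_neg h1]
  · intro p hp
    have h1 : ((p.1, p.2) ∈ lam) := by
      rw [Prod.mk.eta, ← YoungDiagram.mem_cells]; exact hp
    simp only [stdFun, if_pos h1]
    omega

lemma hat_content (n : ℕ) (lam : YoungDiagram) (hcard : lam.card = n) (f : ℕ → ℕ → ℕ)
    (v : ℕ × ℕ) (hv : v ∉ lam.cells) (ν : YoungDiagram) (hν : ν.cells = insert v lam.cells) :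
    ν.cells.val.map (fun p =>
      evacAux (n + 1) (updF (evacAux n (stdFun lam f)) v.1 v.2 (n + 1)) p.1 p.2)
      = (Multiset.range (n + 1)).map (· + 1) := by
  have hS := evac_spec n (stdFun lam f) lam.cells lam.isLowerSet (stdFun_weak lam f) hcard
  have hw' : WeakOn ν.cells (updF (evacAux n (stdFun lam f)) v.1 v.2 (n + 1)) := by
    constructor
    · intro p hp
      have hpv : p ≠ v := fun h => hp (h ▸ (hν ▸ Finset.mem_insert_self v lam.cells))
      rw [updF_ne _ _ _ _ p hpv]
      exact hS.1.1 p (fun hin => hp (hν ▸ Finset.mem_insert_of_mem hin))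
    · intro p hp
      by_cases hpv : p = v
      · subst hpv
        rw [show updF (evacAux n (stdFun lam f)) p.1 p.2 (n + 1) p.1 p.2 = n + 1 from
          updF_self _ _ _ _]
        omega
      · rw [updF_ne _ _ _ _ p hpv]
        have hpl : p ∈ lam.cells := by
          have hp' : p ∈ insert v lam.cells := hν ▸ hp
          rcases Finset.mem_insert.1 hp' with h | h
          · exact absurd h hpv
          · exact h
        exact hS.1.2 p hpl
  have hcard' : ν.cells.card = n + 1 := by
    rw [hν, Finset.card_insert_of_notMem hv]
    have : lam.cells.card = n := hcard
    omega
  exact (evac_spec (n + 1) _ ν.cells ν.isLowerSet hw' hcard').2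

theorem stmt19 (n : ℕ) (hn : 1 ≤ n) (lam : YoungDiagram) (hcard : lam.card = n)
    (M : SemistandardYoungTableau lam) (T : Fin n → ℕ × ℕ) (hT : IsTabloid n lam T)
    (v : ℕ × ℕ) (hv : v ∉ lam.cells) (ν : YoungDiagram) (hν : ν.cells = insert v lam.cells) :
    (deltaOne n lam (entryFun M) v →
      DspCF (n + 1) ν (hatAdd n lam (entryFun M) v) = DspC n M ∧
      entrySumF ν (hatAdd n lam (entryFun M) v) = entrySum M) ∧
    (¬ deltaOne n lam (entryFun M) v →
      DspCF (n + 1) ν (hatAdd n lam (entryFun M) v) = n ::ₘ DspC n M ∧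
      entrySumF ν (hatAdd n lam (entryFun M) v) = entrySum M + n) ∧
    FMTF n (plusOneF lam (entryFun M)) T =
      (∏ i : Fin n, (X i : MvPolynomial (Fin n) ℚ)) * FMT n M T := by
  have hf := hat_content n lam hcard (entryFun M) v hv ν hν
  have hlamne : lam.cells.Nonempty := by
    rw [← Finset.card_pos]
    have : lam.cells.card = n := hcard
    omega
  have hJlt : ∀ j ∈ JminF lam (entryFun M), j < n := by
    intro j hj
    have h1 := JminF_lt hlamne j hj
    have h2 : lam.card = n := hcard
    omega
  have hDspC : DspC n M = (JminF lam (entryFun M)).map (fun j => n - j) := by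
    rw [DspC, DspCF_eq_Jmin]
  have hES : entrySum M = ((JminF lam (entryFun M)).map (fun j => n - j)).sum := by
    rw [entrySum, entrySumF_eq_Jmin]
    refine congrArg Multiset.sum (Multiset.map_congr rfl (fun j hj => ?_))
    have : lam.card = n := hcard
    omega
  have hmapeq : ((JminF lam (entryFun M)).map (· + 1)).map (fun j => n + 1 - j)
      = (JminF lam (entryFun M)).map (fun j => n - j) := by
    rw [Multiset.map_map]
    refine Multiset.map_congr rfl (fun j hj => ?_)
    show n + 1 - (j + 1) = n - j
    omega
  have hfilt : ((JminF lam (entryFun M)).map (· + 1)).filter (· < n + 1)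
      = (JminF lam (entryFun M)).map (· + 1) := by
    rw [Multiset.filter_eq_self]
    intro a ha
    obtain ⟨j, hj, rfl⟩ := Multiset.mem_map.1 ha
    have := hJlt j hj
    omega
  refine ⟨?_, ?_, ?_⟩
  · intro hδ
    have hhat : hatAdd n lam (entryFun M) v = ctJfun ((JminF lam (entryFun M)).map (· + 1))
        (evacAux (n + 1) (updF (evacAux n (stdFun lam (entryFun M))) v.1 v.2 (n + 1))) := by
      simp only [hatAdd]
      rw [if_pos hδ]
    constructor
    · rw [hhat, DspCF_ctJ hf (by omega), hfilt, hmapeq, hDspC]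
    · rw [hhat, entrySumF_ctJ hf, hmapeq, hES]
  · intro hδ
    have hhat : hatAdd n lam (entryFun M) v
        = ctJfun (1 ::ₘ (JminF lam (entryFun M)).map (· + 1))
        (evacAux (n + 1) (updF (evacAux n (stdFun lam (entryFun M))) v.1 v.2 (n + 1))) := by
      simp only [hatAdd]
      rw [if_neg hδ]
    constructor
    · rw [hhat, DspCF_ctJ hf (by omega),
        Multiset.filter_cons_of_pos (p := fun x => x < n + 1) _ (by omega), hfilt,
        Multiset.map_cons, hmapeq, hDspC]
      congr 1
    · rw [hhat, entrySumF_ctJ hf, Multiset.map_cons, Multiset.sum_cons, hmapeq, ← hES]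
      have : n + 1 - 1 = n := by omega
      rw [this]
      omega
  · exact FMTF_plusOne hT.2

end GHS
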